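/- Let k ∈ ℤ and let m ≥ 1 be an integer. Suppose h_0, …, h_{2m−1} : ℍ → ℂ are twice continuously differentiable (as functions of (u, v) with τ = u + iv) and the function Φ(τ, z) := Σ_{ℓ=0}^{2m−1} h_ℓ(τ) ϑ_{m,ℓ}(τ, z) satisfies (C^sk_{k,m} Φ)(τ, z) = 0 for all (τ, z) ∈ ℍ × ℂ. Then for every ℓ ∈ {0, …, 2m−1} and every τ ∈ ℍ, 2iv(k − 1/2)(∂_τ h_ℓ)(τ) + 4v²(∂_τ ∂_τ̄ h_ℓ)(τ) = 0, where v = Im τ. -/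

import Mathlib

open Complex ComplexConjugate

/-- The Jacobi theta function `ϑ_{m,ℓ}(τ, z) = Σ_{r ∈ ℤ, r ≡ ℓ mod 2m} e(r²τ/(4m) + rz)`. -/
noncomputable def jacobiThetaML (m ℓ : ℤ) (τ z : ℂ) : ℂ :=
  ∑' r : {r : ℤ // r ≡ ℓ [ZMOD 2 * m]},
    Complex.exp (2 * Real.pi * Complex.I *
      (((r : ℤ) : ℂ) ^ 2 * τ / (4 * m) + ((r : ℤ) : ℂ) * z))

/-- Real partial derivative of `f : ℂ → ℂ` at `τ` in the direction `w`. -/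
noncomputable def partialDeriv (w : ℂ) (f : ℂ → ℂ) (τ : ℂ) : ℂ := fderiv ℝ f τ w

/-- Wirtinger derivative `∂_τ f = (1/2)(∂f/∂u − i ∂f/∂v)` where `τ = u + iv`. -/
noncomputable def dTau (f : ℂ → ℂ) : ℂ → ℂ :=
  fun τ => (1 / 2) * (partialDeriv 1 f τ - Complex.I * partialDeriv Complex.I f τ)

/-- Wirtinger derivative `∂_τ̄ f = (1/2)(∂f/∂u + i ∂f/∂v)` where `τ = u + iv`. -/
noncomputable def dTauBar (f : ℂ → ℂ) : ℂ → ℂ :=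
  fun τ => (1 / 2) * (partialDeriv 1 f τ + Complex.I * partialDeriv Complex.I f τ)

/-- The heat operator `L_m = 8πim ∂_τ − ∂²/∂z²` acting on `Φ(τ, z)`. -/
noncomputable def heatOp (m : ℤ) (Φ : ℂ → ℂ → ℂ) (τ z : ℂ) : ℂ :=
  8 * Real.pi * Complex.I * (m : ℂ) * dTau (fun w => Φ w z) τ - iteratedDeriv 2 (Φ τ) z

/-- The skew Casimir operator
`C^sk_{k,m} = −(iv²/(πm)) v^{1/2−k} ∘ ∂_τ̄ ∘ v^{k−1/2} ∘ L_m`, `v = Im τ`. -/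
noncomputable def skewCasimir (k m : ℤ) (Φ : ℂ → ℂ → ℂ) (τ z : ℂ) : ℂ :=
  -(Complex.I * (τ.im : ℂ) ^ 2 / (Real.pi * m)) *
    ((τ.im ^ ((1 : ℝ) / 2 - (k : ℝ)) : ℝ) : ℂ) *
    dTauBar (fun w => ((w.im ^ ((k : ℝ) - 1 / 2) : ℝ) : ℂ) * heatOp m Φ w z) τ

/-- The weight-`κ` hyperbolic Laplacian
`Δ_κ = −v²(∂²/∂u² + ∂²/∂v²) + iκv(∂/∂u + i ∂/∂v)`, `τ = u + iv`. -/
noncomputable def hypLaplacian (κ : ℝ) (f : ℂ → ℂ) (τ : ℂ) : ℂ :=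
  -(τ.im : ℂ) ^ 2 *
      (partialDeriv 1 (partialDeriv 1 f) τ +
        partialDeriv Complex.I (partialDeriv Complex.I f) τ) +
    Complex.I * (κ : ℂ) * (τ.im : ℂ) *
      (partialDeriv 1 f τ + Complex.I * partialDeriv Complex.I f τ)

namespace SkewAux

lemma partialDeriv_of_hasFDerivAt {f : ℂ → ℂ} {f' : ℂ →L[ℝ] ℂ} {τ : ℂ}
    (hf : HasFDerivAt f f' τ) (w : ℂ) : partialDeriv w f τ = f' w := by
  rw [partialDeriv, hf.fderiv]

lemma partialDeriv_of_hasDerivAt {f : ℂ → ℂ} {g τ : ℂ} (hf : HasDerivAt f g τ) (w : ℂ) :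
    partialDeriv w f τ = w * g := by
  have := partialDeriv_of_hasFDerivAt ((hf.hasFDerivAt).restrictScalars ℝ) w
  simpa [smul_eq_mul] using this

lemma dTau_of_hasDerivAt {f : ℂ → ℂ} {g τ : ℂ} (hf : HasDerivAt f g τ) :
    dTau f τ = g := by
  rw [dTau]
  rw [partialDeriv_of_hasDerivAt hf 1, partialDeriv_of_hasDerivAt hf Complex.I]
  have : Complex.I * (Complex.I * g) = -g := by
    rw [← mul_assoc, Complex.I_mul_I]; ring
  rw [this]; ring

lemma dTauBar_of_hasDerivAt {f : ℂ → ℂ} {g τ : ℂ} (hf : HasDerivAt f g τ) :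
    dTauBar f τ = 0 := by
  rw [dTauBar]
  rw [partialDeriv_of_hasDerivAt hf 1, partialDeriv_of_hasDerivAt hf Complex.I]
  have : Complex.I * (Complex.I * g) = -g := by
    rw [← mul_assoc, Complex.I_mul_I]; ring
  rw [this]; ring

lemma partialDeriv_mul {f g : ℂ → ℂ} {τ : ℂ} (hf : DifferentiableAt ℝ f τ)
    (hg : DifferentiableAt ℝ g τ) (w : ℂ) :
    partialDeriv w (fun x => f x * g x) τ =
      partialDeriv w f τ * g τ + f τ * partialDeriv w g τ := by
  simp only [partialDeriv]
  rw [fderiv_fun_mul hf hg]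
  simp [smul_eq_mul]; ring

lemma partialDeriv_finset_sum {ι : Type*} (s : Finset ι) {f : ι → ℂ → ℂ} {τ : ℂ}
    (hf : ∀ i ∈ s, DifferentiableAt ℝ (f i) τ) (w : ℂ) :
    partialDeriv w (fun x => ∑ i ∈ s, f i x) τ = ∑ i ∈ s, partialDeriv w (f i) τ := by
  simp only [partialDeriv]
  rw [fderiv_fun_sum hf]
  simp

lemma dTau_mul {f g : ℂ → ℂ} {τ : ℂ} (hf : DifferentiableAt ℝ f τ)
    (hg : DifferentiableAt ℝ g τ) :
    dTau (fun x => f x * g x) τ = dTau f τ * g τ + f τ * dTau g τ := by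
  simp only [dTau, partialDeriv_mul hf hg]; ring

lemma dTauBar_mul {f g : ℂ → ℂ} {τ : ℂ} (hf : DifferentiableAt ℝ f τ)
    (hg : DifferentiableAt ℝ g τ) :
    dTauBar (fun x => f x * g x) τ = dTauBar f τ * g τ + f τ * dTauBar g τ := by
  simp only [dTauBar, partialDeriv_mul hf hg]; ring

lemma dTau_finset_sum {ι : Type*} (s : Finset ι) {f : ι → ℂ → ℂ} {τ : ℂ}
    (hf : ∀ i ∈ s, DifferentiableAt ℝ (f i) τ) :
    dTau (fun x => ∑ i ∈ s, f i x) τ = ∑ i ∈ s, dTau (f i) τ := by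
  simp only [dTau, partialDeriv_finset_sum s hf, mul_sub, Finset.mul_sum,
    ← Finset.sum_sub_distrib]

lemma dTauBar_congr {f g : ℂ → ℂ} {τ : ℂ} (h : f =ᶠ[nhds τ] g) :
    dTauBar f τ = dTauBar g τ := by
  simp only [dTauBar, partialDeriv, h.fderiv_eq]

lemma dTauBar_finset_sum {ι : Type*} (s : Finset ι) {f : ι → ℂ → ℂ} {τ : ℂ}
    (hf : ∀ i ∈ s, DifferentiableAt ℝ (f i) τ) :
    dTauBar (fun x => ∑ i ∈ s, f i x) τ = ∑ i ∈ s, dTauBar (f i) τ := by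
  simp only [dTauBar, partialDeriv_finset_sum s hf, mul_add, Finset.mul_sum,
    ← Finset.sum_add_distrib]

lemma partialDeriv_const_mul {g : ℂ → ℂ} {τ : ℂ} (hg : DifferentiableAt ℝ g τ) (c w : ℂ) :
    partialDeriv w (fun x => c * g x) τ = c * partialDeriv w g τ := by
  simp only [partialDeriv]
  rw [fderiv_const_mul hg]
  simp [smul_eq_mul]

lemma partialDeriv_add {f g : ℂ → ℂ} {τ : ℂ} (hf : DifferentiableAt ℝ f τ)
    (hg : DifferentiableAt ℝ g τ) (w : ℂ) :
    partialDeriv w (fun x => f x + g x) τ = partialDeriv w f τ + partialDeriv w g τ := by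
  simp only [partialDeriv]
  rw [fderiv_fun_add hf hg]; simp

lemma partialDeriv_sub {f g : ℂ → ℂ} {τ : ℂ} (hf : DifferentiableAt ℝ f τ)
    (hg : DifferentiableAt ℝ g τ) (w : ℂ) :
    partialDeriv w (fun x => f x - g x) τ = partialDeriv w f τ - partialDeriv w g τ := by
  simp only [partialDeriv]
  rw [fderiv_fun_sub hf hg]; simp

lemma hasFDerivAt_partialDeriv {f : ℂ → ℂ} {τ : ℂ} (hf : ContDiffAt ℝ 2 f τ) (u : ℂ) :
    HasFDerivAt (fun σ => partialDeriv u f σ)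
      ((ContinuousLinearMap.apply ℝ ℂ u).comp (fderiv ℝ (fderiv ℝ f) τ)) τ := by
  have h1 : DifferentiableAt ℝ (fderiv ℝ f) τ :=
    (hf.fderiv_right (m := 1) (by norm_num)).differentiableAt one_ne_zero
  exact ((ContinuousLinearMap.apply ℝ ℂ u).hasFDerivAt).comp τ h1.hasFDerivAt

lemma differentiableAt_partialDeriv {f : ℂ → ℂ} {τ : ℂ} (hf : ContDiffAt ℝ 2 f τ) (u : ℂ) :
    DifferentiableAt ℝ (fun σ => partialDeriv u f σ) τ :=
  (hasFDerivAt_partialDeriv hf u).differentiableAt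

lemma partialDeriv_partialDeriv {f : ℂ → ℂ} {τ : ℂ} (hf : ContDiffAt ℝ 2 f τ) (w u : ℂ) :
    partialDeriv w (fun σ => partialDeriv u f σ) τ = fderiv ℝ (fderiv ℝ f) τ w u := by
  rw [partialDeriv_of_hasFDerivAt (hasFDerivAt_partialDeriv hf u) w]
  rfl

lemma differentiableAt_dTau {f : ℂ → ℂ} {τ : ℂ} (hf : ContDiffAt ℝ 2 f τ) :
    DifferentiableAt ℝ (dTau f) τ := by
  unfold dTau
  exact (differentiableAt_const _).mul
    ((differentiableAt_partialDeriv hf 1).sub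
      ((differentiableAt_const _).mul (differentiableAt_partialDeriv hf Complex.I)))

lemma differentiableAt_dTauBar {f : ℂ → ℂ} {τ : ℂ} (hf : ContDiffAt ℝ 2 f τ) :
    DifferentiableAt ℝ (dTauBar f) τ := by
  unfold dTauBar
  exact (differentiableAt_const _).mul
    ((differentiableAt_partialDeriv hf 1).add
      ((differentiableAt_const _).mul (differentiableAt_partialDeriv hf Complex.I)))

lemma partialDeriv_dTauBar {f : ℂ → ℂ} {τ : ℂ} (hf : ContDiffAt ℝ 2 f τ) (w : ℂ) :
    partialDeriv w (dTauBar f) τ =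
      (1 / 2) * (fderiv ℝ (fderiv ℝ f) τ w 1 + Complex.I * fderiv ℝ (fderiv ℝ f) τ w Complex.I) := by
  unfold dTauBar
  rw [partialDeriv_const_mul ((differentiableAt_partialDeriv hf 1).fun_add
      ((differentiableAt_const _).fun_mul (differentiableAt_partialDeriv hf Complex.I))),
    partialDeriv_add (differentiableAt_partialDeriv hf 1)
      ((differentiableAt_const _).fun_mul (differentiableAt_partialDeriv hf Complex.I)),
    partialDeriv_const_mul (differentiableAt_partialDeriv hf Complex.I),
    partialDeriv_partialDeriv hf, partialDeriv_partialDeriv hf]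

lemma partialDeriv_dTau {f : ℂ → ℂ} {τ : ℂ} (hf : ContDiffAt ℝ 2 f τ) (w : ℂ) :
    partialDeriv w (dTau f) τ =
      (1 / 2) * (fderiv ℝ (fderiv ℝ f) τ w 1 - Complex.I * fderiv ℝ (fderiv ℝ f) τ w Complex.I) := by
  unfold dTau
  rw [partialDeriv_const_mul ((differentiableAt_partialDeriv hf 1).fun_sub
      ((differentiableAt_const _).fun_mul (differentiableAt_partialDeriv hf Complex.I))),
    partialDeriv_sub (differentiableAt_partialDeriv hf 1)
      ((differentiableAt_const _).fun_mul (differentiableAt_partialDeriv hf Complex.I)),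
    partialDeriv_const_mul (differentiableAt_partialDeriv hf Complex.I),
    partialDeriv_partialDeriv hf, partialDeriv_partialDeriv hf]

lemma dTau_dTauBar_comm {f : ℂ → ℂ} {τ : ℂ} (hf : ContDiffAt ℝ 2 f τ) :
    dTau (dTauBar f) τ = dTauBar (dTau f) τ := by
  have hsymm : fderiv ℝ (fderiv ℝ f) τ 1 Complex.I = fderiv ℝ (fderiv ℝ f) τ Complex.I 1 :=
    (hf.isSymmSndFDerivAt (by norm_num)).eq 1 Complex.I
  show (1/2) * (partialDeriv 1 (dTauBar f) τ - Complex.I * partialDeriv Complex.I (dTauBar f) τ)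
    = (1/2) * (partialDeriv 1 (dTau f) τ + Complex.I * partialDeriv Complex.I (dTau f) τ)
  rw [partialDeriv_dTauBar hf, partialDeriv_dTauBar hf, partialDeriv_dTau hf,
    partialDeriv_dTau hf, hsymm]
  ring

lemma dTauBar_const_mul {g : ℂ → ℂ} {τ : ℂ} (hg : DifferentiableAt ℝ g τ) (c : ℂ) :
    dTauBar (fun x => c * g x) τ = c * dTauBar g τ := by
  simp only [dTauBar, partialDeriv_const_mul hg]
  ring

lemma hasFDerivAt_impow (c : ℝ) {τ : ℂ} (hτ : 0 < τ.im) :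
    HasFDerivAt (fun w : ℂ => ((w.im ^ c : ℝ) : ℂ))
      (Complex.ofRealCLM.comp ((c * τ.im ^ (c - 1)) • Complex.imCLM)) τ := by
  have h1 : HasFDerivAt (fun w : ℂ => w.im) Complex.imCLM τ := Complex.imCLM.hasFDerivAt
  have h2 : HasDerivAt (fun x : ℝ => x ^ c) (c * τ.im ^ (c - 1)) τ.im :=
    Real.hasDerivAt_rpow_const (Or.inl hτ.ne')
  have h3 : HasFDerivAt (fun w : ℂ => w.im ^ c) ((c * τ.im ^ (c - 1)) • Complex.imCLM) τ :=
    h2.comp_hasFDerivAt τ h1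
  exact Complex.ofRealCLM.hasFDerivAt.comp τ h3

lemma differentiableAt_impow (c : ℝ) {τ : ℂ} (hτ : 0 < τ.im) :
    DifferentiableAt ℝ (fun w : ℂ => ((w.im ^ c : ℝ) : ℂ)) τ :=
  (hasFDerivAt_impow c hτ).differentiableAt

lemma dTauBar_impow (c : ℝ) {τ : ℂ} (hτ : 0 < τ.im) :
    dTauBar (fun w : ℂ => ((w.im ^ c : ℝ) : ℂ)) τ
      = (Complex.I / 2) * ((c * τ.im ^ (c - 1) : ℝ) : ℂ) := by
  have hf := hasFDerivAt_impow c hτ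
  show (1 / 2 : ℂ) * (partialDeriv 1 (fun w : ℂ => ((w.im ^ c : ℝ) : ℂ)) τ
    + Complex.I * partialDeriv Complex.I (fun w : ℂ => ((w.im ^ c : ℝ) : ℂ)) τ) = _
  rw [partialDeriv_of_hasFDerivAt hf 1, partialDeriv_of_hasFDerivAt hf Complex.I]
  simp only [ContinuousLinearMap.coe_comp', Function.comp_apply,
    ContinuousLinearMap.coe_smul', Pi.smul_apply, Complex.imCLM_apply, Complex.one_im,
    Complex.I_im, Complex.ofRealCLM_apply, smul_eq_mul, mul_zero, mul_one,
    Complex.ofReal_zero]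
  ring

noncomputable def tt (m r : ℤ) (τ z : ℂ) : ℂ :=
  Complex.exp (2 * Real.pi * Complex.I * (((r : ℤ) : ℂ) ^ 2 * τ / (4 * m) + ((r : ℤ) : ℂ) * z))

lemma jacobiThetaML_def (m l : ℤ) (τ z : ℂ) :
    jacobiThetaML m l τ z = ∑' r : {r : ℤ // r ≡ l [ZMOD 2 * m]}, tt m (r : ℤ) τ z := rfl

lemma re_helper (a b : ℝ) (τ z : ℂ) :
    (2 * (Real.pi : ℂ) * Complex.I * ((a : ℂ) * τ + (b : ℂ) * z)).re =
      -(2 * Real.pi) * (a * τ.im + b * z.im) := by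
  simp [Complex.mul_re, Complex.mul_im, Complex.add_re, Complex.add_im]

lemma norm_tt (m r : ℤ) (τ z : ℂ) :
    ‖tt m r τ z‖ =
      Real.exp (-(2 * Real.pi) * ((r : ℝ) ^ 2 / (4 * (m : ℝ)) * τ.im + (r : ℝ) * z.im)) := by
  have harg : 2 * (Real.pi : ℂ) * Complex.I *
        (((r : ℤ) : ℂ) ^ 2 * τ / (4 * (m : ℂ)) + ((r : ℤ) : ℂ) * z) =
      2 * (Real.pi : ℂ) * Complex.I *
        ((((r : ℝ) ^ 2 / (4 * (m : ℝ)) : ℝ) : ℂ) * τ + (((r : ℝ) : ℝ) : ℂ) * z) := by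
    push_cast
    ring
  rw [tt, harg, Complex.norm_exp, re_helper]

lemma norm_tt_le {m : ℤ} (hm : 1 ≤ m) {ε R : ℝ} (hε : 0 < ε) {w z : ℂ}
    (hw : ε ≤ w.im) (hz : |z.im| ≤ R) (r : ℤ) :
    ‖tt m r w z‖ ≤ Real.exp (-Real.pi * (ε / (2 * (m : ℝ)) * (r : ℝ) ^ 2 - 2 * R * |(r : ℝ)|)) := by
  have hmR : (1 : ℝ) ≤ (m : ℝ) := by exact_mod_cast hm
  have hmpos : (0 : ℝ) < (m : ℝ) := by linarith
  rw [norm_tt]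
  apply Real.exp_le_exp.2
  have key : -Real.pi * (ε / (2 * (m : ℝ)) * (r : ℝ) ^ 2 - 2 * R * |(r : ℝ)|) =
      -(2 * Real.pi) * ((r : ℝ) ^ 2 / (4 * (m : ℝ)) * ε - R * |(r : ℝ)|) := by
    field_simp
    ring
  rw [key]
  have hpi : (0 : ℝ) < Real.pi := Real.pi_pos
  have h1 : (r : ℝ) ^ 2 / (4 * (m : ℝ)) * ε ≤ (r : ℝ) ^ 2 / (4 * (m : ℝ)) * w.im := by
    apply mul_le_mul_of_nonneg_left hw
    positivity
  have h2 : -(R * |(r : ℝ)|) ≤ (r : ℝ) * z.im := by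
    have := neg_abs_le ((r : ℝ) * z.im)
    have habs : |(r : ℝ) * z.im| ≤ |(r : ℝ)| * R := by
      rw [abs_mul]
      exact mul_le_mul_of_nonneg_left hz (abs_nonneg _)
    nlinarith [abs_nonneg ((r : ℝ))]
  nlinarith

lemma summable_master (S : ℝ) {T : ℝ} (hT : 0 < T) (k : ℕ) :
    Summable (fun n : ℤ => |(n : ℝ)| ^ k * Real.exp (-Real.pi * (T * (n : ℝ) ^ 2 - 2 * S * |(n : ℝ)|))) := by
  have h := summable_pow_mul_jacobiTheta₂_term_bound S hT k
  apply h.congr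
  intro n
  push_cast
  ring_nf

lemma summable_master_sub (S : ℝ) {T : ℝ} (hT : 0 < T) (k : ℕ) (p : ℤ → Prop) :
    Summable (fun r : {r : ℤ // p r} =>
      |((r : ℤ) : ℝ)| ^ k * Real.exp (-Real.pi * (T * ((r : ℤ) : ℝ) ^ 2 - 2 * S * |((r : ℤ) : ℝ)|))) :=
  (summable_master S hT k).subtype _

lemma tt_eq (m r : ℤ) (τ z : ℂ) :
    tt m r τ z = Complex.exp ((2 * (Real.pi : ℂ) * Complex.I * ((r : ℤ) : ℂ) ^ 2 / (4 * (m : ℂ))) * τ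
      + (2 * (Real.pi : ℂ) * Complex.I * ((r : ℤ) : ℂ)) * z) := by
  rw [tt]
  congr 1
  ring

lemma hasDerivAt_tt_tau (m r : ℤ) (z τ : ℂ) :
    HasDerivAt (fun w => tt m r w z)
      (2 * (Real.pi : ℂ) * Complex.I * ((r : ℤ) : ℂ) ^ 2 / (4 * (m : ℂ)) * tt m r τ z) τ := by
  have heq : (fun w => tt m r w z) = fun w =>
      Complex.exp ((2 * (Real.pi : ℂ) * Complex.I * ((r : ℤ) : ℂ) ^ 2 / (4 * (m : ℂ))) * w
        + (2 * (Real.pi : ℂ) * Complex.I * ((r : ℤ) : ℂ)) * z) := funext fun w => tt_eq m r w z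
  rw [heq, tt_eq]
  have h : HasDerivAt (fun w : ℂ =>
      (2 * (Real.pi : ℂ) * Complex.I * ((r : ℤ) : ℂ) ^ 2 / (4 * (m : ℂ))) * w
        + (2 * (Real.pi : ℂ) * Complex.I * ((r : ℤ) : ℂ)) * z)
      (2 * (Real.pi : ℂ) * Complex.I * ((r : ℤ) : ℂ) ^ 2 / (4 * (m : ℂ))) τ := by
    simpa using ((hasDerivAt_id τ).const_mul
      (2 * (Real.pi : ℂ) * Complex.I * ((r : ℤ) : ℂ) ^ 2 / (4 * (m : ℂ)))).add_const
      ((2 * (Real.pi : ℂ) * Complex.I * ((r : ℤ) : ℂ)) * z)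
  simpa [mul_comm] using h.cexp

lemma hasDerivAt_tt_z (m r : ℤ) (τ z : ℂ) :
    HasDerivAt (fun y => tt m r τ y)
      (2 * (Real.pi : ℂ) * Complex.I * ((r : ℤ) : ℂ) * tt m r τ z) z := by
  have heq : (fun y => tt m r τ y) = fun y =>
      Complex.exp ((2 * (Real.pi : ℂ) * Complex.I * ((r : ℤ) : ℂ)) * y
        + (2 * (Real.pi : ℂ) * Complex.I * ((r : ℤ) : ℂ) ^ 2 / (4 * (m : ℂ))) * τ) := by
    funext y
    rw [tt]
    congr 1
    ring
  rw [heq, tt_eq]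
  have h : HasDerivAt (fun y : ℂ =>
      (2 * (Real.pi : ℂ) * Complex.I * ((r : ℤ) : ℂ)) * y
        + (2 * (Real.pi : ℂ) * Complex.I * ((r : ℤ) : ℂ) ^ 2 / (4 * (m : ℂ))) * τ)
      (2 * (Real.pi : ℂ) * Complex.I * ((r : ℤ) : ℂ)) z := by
    simpa using ((hasDerivAt_id z).const_mul
      (2 * (Real.pi : ℂ) * Complex.I * ((r : ℤ) : ℂ))).add_const
      ((2 * (Real.pi : ℂ) * Complex.I * ((r : ℤ) : ℂ) ^ 2 / (4 * (m : ℂ))) * τ)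
  have h2 := h.cexp
  rw [show (2 * (Real.pi : ℂ) * Complex.I * ((r : ℤ) : ℂ)) * z
        + (2 * (Real.pi : ℂ) * Complex.I * ((r : ℤ) : ℂ) ^ 2 / (4 * (m : ℂ))) * τ
      = (2 * (Real.pi : ℂ) * Complex.I * ((r : ℤ) : ℂ) ^ 2 / (4 * (m : ℂ))) * τ
        + (2 * (Real.pi : ℂ) * Complex.I * ((r : ℤ) : ℂ)) * z by ring] at h2
  simpa [mul_comm] using h2

noncomputable def thetaDTau (m l : ℤ) (τ z : ℂ) : ℂ :=
  ∑' r : {r : ℤ // r ≡ l [ZMOD 2 * m]},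
    2 * (Real.pi : ℂ) * Complex.I * ((r : ℤ) : ℂ) ^ 2 / (4 * (m : ℂ)) * tt m (r : ℤ) τ z

noncomputable def D1 (m l : ℤ) (τ z : ℂ) : ℂ :=
  ∑' r : {r : ℤ // r ≡ l [ZMOD 2 * m]},
    2 * (Real.pi : ℂ) * Complex.I * ((r : ℤ) : ℂ) * tt m (r : ℤ) τ z

noncomputable def D2 (m l : ℤ) (τ z : ℂ) : ℂ :=
  ∑' r : {r : ℤ // r ≡ l [ZMOD 2 * m]},
    (2 * (Real.pi : ℂ) * Complex.I * ((r : ℤ) : ℂ)) ^ 2 * tt m (r : ℤ) τ z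

lemma hasDerivAt_theta_tau {m : ℤ} (hm : 1 ≤ m) (l : ℤ) (z : ℂ) {τ : ℂ} (hτ : 0 < τ.im) :
    HasDerivAt (fun w => jacobiThetaML m l w z) (thetaDTau m l τ z) τ := by
  have hmR : (0 : ℝ) < (m : ℝ) := by exact_mod_cast lt_of_lt_of_le zero_lt_one hm
  set ε := τ.im / 2 with hεdef
  have hε0 : 0 < ε := by positivity
  set U : Set ℂ := {w : ℂ | ε < w.im} with hUdef
  have hUopen : IsOpen U := isOpen_lt continuous_const Complex.continuous_im
  have hτU : τ ∈ U := by
    simp only [hUdef, Set.mem_setOf_eq, hεdef]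
    linarith
  set u : {r : ℤ // r ≡ l [ZMOD 2 * m]} → ℝ := fun r =>
    Real.exp (-Real.pi * (ε / (2 * (m : ℝ)) * ((r : ℤ) : ℝ) ^ 2 - 2 * |z.im| * |((r : ℤ) : ℝ)|))
    with hudef
  have hu : Summable u := by
    have := summable_master_sub |z.im| (T := ε / (2 * (m : ℝ))) (by positivity) 0
      (fun r => r ≡ l [ZMOD 2 * m])
    simpa [hudef] using this
  have hdiff : ∀ r : {r : ℤ // r ≡ l [ZMOD 2 * m]},
      DifferentiableOn ℂ (fun w => tt m (r : ℤ) w z) U := fun r w _ =>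
    (hasDerivAt_tt_tau m (r : ℤ) z w).differentiableAt.differentiableWithinAt
  have hle : ∀ (r : {r : ℤ // r ≡ l [ZMOD 2 * m]}) (w : ℂ), w ∈ U → ‖tt m (r : ℤ) w z‖ ≤ u r :=
    fun r w hw => norm_tt_le hm hε0 (le_of_lt hw) (le_refl |z.im|) (r : ℤ)
  have hsum := hasSum_deriv_of_summable_norm hu hdiff hUopen hle hτU
  have hdω : DifferentiableAt ℂ (fun w => ∑' r : {r : ℤ // r ≡ l [ZMOD 2 * m]}, tt m (r : ℤ) w z) τ :=
    (differentiableOn_tsum_of_summable_norm hu hdiff hUopen hle).differentiableAt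
      (hUopen.mem_nhds hτU)
  have hderiv : deriv (fun w => ∑' r : {r : ℤ // r ≡ l [ZMOD 2 * m]}, tt m (r : ℤ) w z) τ
      = thetaDTau m l τ z := by
    rw [← hsum.tsum_eq, thetaDTau]
    exact tsum_congr fun r => (hasDerivAt_tt_tau m (r : ℤ) z τ).deriv
  have := hdω.hasDerivAt
  rw [hderiv] at this
  have hfun : (fun w => jacobiThetaML m l w z)
      = fun w => ∑' r : {r : ℤ // r ≡ l [ZMOD 2 * m]}, tt m (r : ℤ) w z :=
    funext fun w => jacobiThetaML_def m l w z
  rw [hfun]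
  exact this

lemma norm_two_pi_I_r (r : ℤ) : ‖2 * (Real.pi : ℂ) * Complex.I * ((r : ℤ) : ℂ)‖
    = 2 * Real.pi * |((r : ℤ) : ℝ)| := by
  simp only [norm_mul, Complex.norm_I, Complex.norm_ofNat,
    Complex.norm_real, Real.norm_eq_abs, Complex.norm_intCast]
  rw [_root_.abs_of_nonneg Real.pi_pos.le]
  push_cast
  ring

lemma hasDerivAt_theta_z {m : ℤ} (hm : 1 ≤ m) (l : ℤ) {τ : ℂ} (hτ : 0 < τ.im) (z : ℂ) :
    HasDerivAt (fun y => jacobiThetaML m l τ y) (D1 m l τ z) z := by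
  have hmR : (0 : ℝ) < (m : ℝ) := by exact_mod_cast lt_of_lt_of_le zero_lt_one hm
  set R := |z.im| + 1 with hRdef
  set U : Set ℂ := {y : ℂ | |y.im| < R} with hUdef
  have hUopen : IsOpen U := isOpen_lt (continuous_abs.comp Complex.continuous_im) continuous_const
  have hzU : z ∈ U := by simp only [hUdef, Set.mem_setOf_eq, hRdef]; linarith
  set u : {r : ℤ // r ≡ l [ZMOD 2 * m]} → ℝ := fun r =>
    Real.exp (-Real.pi * (τ.im / (2 * (m : ℝ)) * ((r : ℤ) : ℝ) ^ 2 - 2 * R * |((r : ℤ) : ℝ)|))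
    with hudef
  have hu : Summable u := by
    have := summable_master_sub R (T := τ.im / (2 * (m : ℝ))) (by positivity) 0
      (fun r => r ≡ l [ZMOD 2 * m])
    simpa [hudef] using this
  have hdiff : ∀ r : {r : ℤ // r ≡ l [ZMOD 2 * m]},
      DifferentiableOn ℂ (fun y => tt m (r : ℤ) τ y) U := fun r y _ =>
    (hasDerivAt_tt_z m (r : ℤ) τ y).differentiableAt.differentiableWithinAt
  have hle : ∀ (r : {r : ℤ // r ≡ l [ZMOD 2 * m]}) (y : ℂ), y ∈ U → ‖tt m (r : ℤ) τ y‖ ≤ u r :=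
    fun r y hy => norm_tt_le hm hτ (le_refl τ.im) (le_of_lt hy) (r : ℤ)
  have hsum := hasSum_deriv_of_summable_norm hu hdiff hUopen hle hzU
  have hdω : DifferentiableAt ℂ
      (fun y => ∑' r : {r : ℤ // r ≡ l [ZMOD 2 * m]}, tt m (r : ℤ) τ y) z :=
    (differentiableOn_tsum_of_summable_norm hu hdiff hUopen hle).differentiableAt
      (hUopen.mem_nhds hzU)
  have hderiv : deriv (fun y => ∑' r : {r : ℤ // r ≡ l [ZMOD 2 * m]}, tt m (r : ℤ) τ y) z
      = D1 m l τ z := by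
    rw [← hsum.tsum_eq, D1]
    exact tsum_congr fun r => (hasDerivAt_tt_z m (r : ℤ) τ z).deriv
  have := hdω.hasDerivAt
  rw [hderiv] at this
  have hfun : (fun y => jacobiThetaML m l τ y)
      = fun y => ∑' r : {r : ℤ // r ≡ l [ZMOD 2 * m]}, tt m (r : ℤ) τ y :=
    funext fun y => jacobiThetaML_def m l τ y
  rw [hfun]
  exact this

lemma hasDerivAt_D1 {m : ℤ} (hm : 1 ≤ m) (l : ℤ) {τ : ℂ} (hτ : 0 < τ.im) (z : ℂ) :
    HasDerivAt (fun y => D1 m l τ y) (D2 m l τ z) z := by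
  have hmR : (0 : ℝ) < (m : ℝ) := by exact_mod_cast lt_of_lt_of_le zero_lt_one hm
  have hπ : (0 : ℝ) < Real.pi := Real.pi_pos
  set R := |z.im| + 1 with hRdef
  set U : Set ℂ := {y : ℂ | |y.im| < R} with hUdef
  have hUopen : IsOpen U := isOpen_lt (continuous_abs.comp Complex.continuous_im) continuous_const
  have hzU : z ∈ U := by simp only [hUdef, Set.mem_setOf_eq, hRdef]; linarith
  set u : {r : ℤ // r ≡ l [ZMOD 2 * m]} → ℝ := fun r =>
    2 * Real.pi * (|((r : ℤ) : ℝ)| ^ 1 *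
      Real.exp (-Real.pi * (τ.im / (2 * (m : ℝ)) * ((r : ℤ) : ℝ) ^ 2 - 2 * R * |((r : ℤ) : ℝ)|)))
    with hudef
  have hu : Summable u := by
    exact (summable_master_sub R (T := τ.im / (2 * (m : ℝ))) (by positivity) 1
      (fun r => r ≡ l [ZMOD 2 * m])).mul_left _
  have hdiff : ∀ r : {r : ℤ // r ≡ l [ZMOD 2 * m]},
      DifferentiableOn ℂ
        (fun y => 2 * (Real.pi : ℂ) * Complex.I * ((r : ℤ) : ℂ) * tt m (r : ℤ) τ y) U :=
    fun r y _ =>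
      (((hasDerivAt_tt_z m (r : ℤ) τ y).const_mul
        (2 * (Real.pi : ℂ) * Complex.I * ((r : ℤ) : ℂ))).differentiableAt).differentiableWithinAt
  have hle : ∀ (r : {r : ℤ // r ≡ l [ZMOD 2 * m]}) (y : ℂ), y ∈ U →
      ‖2 * (Real.pi : ℂ) * Complex.I * ((r : ℤ) : ℂ) * tt m (r : ℤ) τ y‖ ≤ u r := by
    intro r y hy
    rw [norm_mul, norm_two_pi_I_r, hudef]
    simp only [pow_one]
    rw [mul_assoc]
    apply mul_le_mul_of_nonneg_left _ (by positivity)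
    apply mul_le_mul_of_nonneg_left _ (abs_nonneg _)
    exact norm_tt_le hm hτ (le_refl τ.im) (le_of_lt hy) (r : ℤ)
  have hsum := hasSum_deriv_of_summable_norm hu hdiff hUopen hle hzU
  have hdω : DifferentiableAt ℂ (fun y => D1 m l τ y) z :=
    (differentiableOn_tsum_of_summable_norm hu hdiff hUopen hle).differentiableAt
      (hUopen.mem_nhds hzU)
  have hderiv : deriv (fun y => D1 m l τ y) z = D2 m l τ z := by
    have : deriv (fun y => ∑' r : {r : ℤ // r ≡ l [ZMOD 2 * m]},
        2 * (Real.pi : ℂ) * Complex.I * ((r : ℤ) : ℂ) * tt m (r : ℤ) τ y) z = D2 m l τ z := by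
      rw [← hsum.tsum_eq, D2]
      refine tsum_congr fun r => ?_
      rw [((hasDerivAt_tt_z m (r : ℤ) τ z).const_mul
        (2 * (Real.pi : ℂ) * Complex.I * ((r : ℤ) : ℂ))).deriv]
      ring
    exact this
  have := hdω.hasDerivAt
  rw [hderiv] at this
  exact this

lemma iteratedDeriv_two_theta {m : ℤ} (hm : 1 ≤ m) (l : ℤ) {τ : ℂ} (hτ : 0 < τ.im) (z : ℂ) :
    iteratedDeriv 2 (fun y => jacobiThetaML m l τ y) z = D2 m l τ z := by
  rw [iteratedDeriv_succ, iteratedDeriv_one]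
  have hd : deriv (fun y => jacobiThetaML m l τ y) = fun y => D1 m l τ y :=
    funext fun y => (hasDerivAt_theta_z hm l hτ y).deriv
  rw [hd]
  exact (hasDerivAt_D1 hm l hτ z).deriv

lemma heat_theta {m : ℤ} (hm : 1 ≤ m) (l : ℤ) (τ z : ℂ) :
    8 * (Real.pi : ℂ) * Complex.I * (m : ℂ) * thetaDTau m l τ z = D2 m l τ z := by
  have hm0 : (m : ℂ) ≠ 0 := by
    exact_mod_cast Int.ne_of_gt (lt_of_lt_of_le zero_lt_one hm)
  rw [thetaDTau, D2, ← tsum_mul_left]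
  refine tsum_congr fun r => ?_
  field_simp
  ring

lemma continuous_theta_z {m : ℤ} (hm : 1 ≤ m) (l : ℤ) {τ : ℂ} (hτ : 0 < τ.im) :
    Continuous (fun y => jacobiThetaML m l τ y) := by
  have : Differentiable ℂ (fun y => jacobiThetaML m l τ y) :=
    fun y => (hasDerivAt_theta_z hm l hτ y).differentiableAt
  exact this.continuous

open MeasureTheory in
lemma integral_exp_int (n : ℤ) :
    ∫ x in Set.Ioc (0 : ℝ) 1, Complex.exp (2 * (Real.pi : ℂ) * Complex.I * (n : ℂ) * (x : ℂ))
      = if n = 0 then 1 else 0 := by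
  rw [← intervalIntegral.integral_of_le zero_le_one]
  rcases eq_or_ne n 0 with hn | hn
  · simp [hn]
  · rw [if_neg hn]
    have hc : (2 * (Real.pi : ℂ) * Complex.I * (n : ℂ)) ≠ 0 :=
      mul_ne_zero Complex.two_pi_I_ne_zero (by exact_mod_cast hn)
    have := integral_exp_mul_complex (a := 0) (b := 1) hc
    rw [show (fun x : ℝ => Complex.exp (2 * (Real.pi : ℂ) * Complex.I * (n : ℂ) * (x : ℂ)))
        = fun x : ℝ => Complex.exp (2 * (Real.pi : ℂ) * Complex.I * (n : ℂ) * (x : ℂ)) from rfl]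
    rw [this]
    have h1 : (2 * (Real.pi : ℂ) * Complex.I * (n : ℂ)) * (1 : ℝ) = (n : ℂ) * (2 * Real.pi * Complex.I) := by
      push_cast; ring
    have h0 : (2 * (Real.pi : ℂ) * Complex.I * (n : ℂ)) * ((0 : ℝ) : ℂ) = 0 := by
      push_cast; ring
    rw [h1, h0, Complex.exp_int_mul_two_pi_mul_I, Complex.exp_zero, sub_self, zero_div]

lemma tt_split (m r l₀ : ℤ) (τ : ℂ) (x : ℝ) :
    tt m r τ (x : ℂ) * Complex.exp (-(2 * (Real.pi : ℂ) * Complex.I * (l₀ : ℂ)) * (x : ℂ))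
      = Complex.exp (2 * (Real.pi : ℂ) * Complex.I * ((r : ℂ) ^ 2 * τ / (4 * (m : ℂ))))
        * Complex.exp (2 * (Real.pi : ℂ) * Complex.I * ((r : ℂ) - (l₀ : ℂ)) * (x : ℂ)) := by
  rw [tt, ← Complex.exp_add, ← Complex.exp_add]
  congr 1
  ring

open MeasureTheory in
lemma integrable_tt_char (m r l₀ : ℤ) (τ : ℂ) :
    IntegrableOn (fun x : ℝ =>
      tt m r τ (x : ℂ) * Complex.exp (-(2 * (Real.pi : ℂ) * Complex.I * (l₀ : ℂ)) * (x : ℂ)))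
      (Set.Ioc (0 : ℝ) 1) := by
  apply Continuous.integrableOn_Ioc
  have h1 : Continuous fun x : ℝ => tt m r τ (x : ℂ) := by
    have : Continuous fun y : ℂ => tt m r τ y :=
      Differentiable.continuous (fun y => (hasDerivAt_tt_z m r τ y).differentiableAt)
    exact this.comp Complex.continuous_ofReal
  exact h1.mul ((Complex.continuous_exp).comp (by continuity))

lemma norm_tt_char (m r l₀ : ℤ) (τ : ℂ) (x : ℝ) :
    ‖tt m r τ (x : ℂ) * Complex.exp (-(2 * (Real.pi : ℂ) * Complex.I * (l₀ : ℂ)) * (x : ℂ))‖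
      = Real.exp (-(2 * Real.pi) * ((r : ℝ) ^ 2 / (4 * (m : ℝ)) * τ.im)) := by
  rw [norm_mul, norm_tt]
  have h2 : ‖Complex.exp (-(2 * (Real.pi : ℂ) * Complex.I * (l₀ : ℂ)) * (x : ℂ))‖ = 1 := by
    rw [Complex.norm_exp]
    have : (-(2 * (Real.pi : ℂ) * Complex.I * (l₀ : ℂ)) * (x : ℂ)).re = 0 := by
      simp [Complex.mul_re, Complex.mul_im]
    rw [this, Real.exp_zero]
  rw [h2, mul_one, Complex.ofReal_im]
  ring_nf

open MeasureTheory in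
lemma theta_char_integral {m : ℤ} (hm : 1 ≤ m) {τ : ℂ} (hτ : 0 < τ.im) (l l₀ : ℤ) :
    ∫ x in Set.Ioc (0 : ℝ) 1, jacobiThetaML m l τ (x : ℂ)
        * Complex.exp (-(2 * (Real.pi : ℂ) * Complex.I * (l₀ : ℂ)) * (x : ℂ))
      = ∑' r : {r : ℤ // r ≡ l [ZMOD 2 * m]},
          (if ((r : ℤ) : ℤ) = l₀ then
            Complex.exp (2 * (Real.pi : ℂ) * Complex.I * (((r : ℤ) : ℂ) ^ 2 * τ / (4 * (m : ℂ))))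
          else 0) := by
  have hmR : (0 : ℝ) < (m : ℝ) := by exact_mod_cast lt_of_lt_of_le zero_lt_one hm
  set F : {r : ℤ // r ≡ l [ZMOD 2 * m]} → ℝ → ℂ := fun r x =>
    tt m (r : ℤ) τ (x : ℂ) * Complex.exp (-(2 * (Real.pi : ℂ) * Complex.I * (l₀ : ℂ)) * (x : ℂ))
    with hFdef
  have hF_int : ∀ r, Integrable (F r) (volume.restrict (Set.Ioc (0 : ℝ) 1)) := fun r =>
    integrable_tt_char m (r : ℤ) l₀ τ
  have hF_norm : ∀ (r : {r : ℤ // r ≡ l [ZMOD 2 * m]}),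
      (∫ x in Set.Ioc (0 : ℝ) 1, ‖F r x‖)
        = Real.exp (-(2 * Real.pi) * (((r : ℤ) : ℝ) ^ 2 / (4 * (m : ℝ)) * τ.im)) := by
    intro r
    rw [setIntegral_congr_fun measurableSet_Ioc
      (fun x _ => norm_tt_char m (r : ℤ) l₀ τ x), setIntegral_const]
    simp [Real.volume_Ioc]
  have hF_sum : Summable fun r : {r : ℤ // r ≡ l [ZMOD 2 * m]} =>
      ∫ x in Set.Ioc (0 : ℝ) 1, ‖F r x‖ := by
    have h := summable_master_sub 0 (T := τ.im / (2 * (m : ℝ))) (by positivity) 0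
      (fun r => r ≡ l [ZMOD 2 * m])
    apply h.congr
    intro r
    rw [hF_norm r]
    simp only [pow_zero, one_mul]
    congr 1
    field_simp
    ring
  have hswap := integral_tsum_of_summable_integral_norm hF_int hF_sum
  have htsum : ∀ x : ℝ, (∑' r : {r : ℤ // r ≡ l [ZMOD 2 * m]}, F r x)
      = jacobiThetaML m l τ (x : ℂ)
        * Complex.exp (-(2 * (Real.pi : ℂ) * Complex.I * (l₀ : ℂ)) * (x : ℂ)) := by
    intro x
    rw [jacobiThetaML_def, ← tsum_mul_right]
  have hint_eq : ∀ r : {r : ℤ // r ≡ l [ZMOD 2 * m]},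
      (∫ x in Set.Ioc (0 : ℝ) 1, F r x)
        = (if ((r : ℤ) : ℤ) = l₀ then
            Complex.exp (2 * (Real.pi : ℂ) * Complex.I * (((r : ℤ) : ℂ) ^ 2 * τ / (4 * (m : ℂ))))
          else 0) := by
    intro r
    have hsplit : ∀ x : ℝ, F r x
        = Complex.exp (2 * (Real.pi : ℂ) * Complex.I * (((r : ℤ) : ℂ) ^ 2 * τ / (4 * (m : ℂ))))
          * Complex.exp (2 * (Real.pi : ℂ) * Complex.I * (((r : ℤ) - l₀ : ℤ) : ℂ) * (x : ℂ)) := by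
      intro x
      have hF : F r x = tt m (r : ℤ) τ (x : ℂ)
          * Complex.exp (-(2 * (Real.pi : ℂ) * Complex.I * (l₀ : ℂ)) * (x : ℂ)) := rfl
      rw [hF, tt_split m (r : ℤ) l₀ τ x]
      congr 2
      push_cast
      ring
    rw [setIntegral_congr_fun measurableSet_Ioc (fun x _ => hsplit x), MeasureTheory.integral_const_mul _ _,
      integral_exp_int ((r : ℤ) - l₀)]
    by_cases hr : ((r : ℤ) : ℤ) = l₀
    · rw [if_pos hr, if_pos (by omega), mul_one]
    · rw [if_neg hr, if_neg (by omega), mul_zero]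
  calc ∫ x in Set.Ioc (0 : ℝ) 1, jacobiThetaML m l τ (x : ℂ)
        * Complex.exp (-(2 * (Real.pi : ℂ) * Complex.I * (l₀ : ℂ)) * (x : ℂ))
      = ∫ x in Set.Ioc (0 : ℝ) 1, (∑' r : {r : ℤ // r ≡ l [ZMOD 2 * m]}, F r x) := by
        refine (setIntegral_congr_fun measurableSet_Ioc (fun x _ => (htsum x).symm))
    _ = ∑' r : {r : ℤ // r ≡ l [ZMOD 2 * m]}, ∫ x in Set.Ioc (0 : ℝ) 1, F r x := hswap.symm
    _ = _ := tsum_congr hint_eq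

open MeasureTheory in
lemma integrable_theta_char {m : ℤ} (hm : 1 ≤ m) {τ : ℂ} (hτ : 0 < τ.im) (l l₀ : ℤ) :
    IntegrableOn (fun x : ℝ => jacobiThetaML m l τ (x : ℂ)
      * Complex.exp (-(2 * (Real.pi : ℂ) * Complex.I * (l₀ : ℂ)) * (x : ℂ)))
      (Set.Ioc (0 : ℝ) 1) := by
  apply Continuous.integrableOn_Ioc
  exact ((continuous_theta_z hm l hτ).comp Complex.continuous_ofReal).mul
    ((Complex.continuous_exp).comp (by continuity))

open MeasureTheory in
lemma theta_indep {m : ℤ} (hm : 1 ≤ m) {τ : ℂ} (hτ : 0 < τ.im) (c : ℕ → ℂ)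
    (hc : ∀ z : ℂ, ∑ l ∈ Finset.range (2 * m).toNat, c l * jacobiThetaML m (l : ℤ) τ z = 0) :
    ∀ l₀ < (2 * m).toNat, c l₀ = 0 := by
  intro l₀ hl₀
  have h2m : ((2 * m).toNat : ℤ) = 2 * m := Int.toNat_of_nonneg (by linarith)
  have hl₀' : ((l₀ : ℤ)) < 2 * m := by omega
  -- the integral of the sum against the character e^{-2πi l₀ x} vanishes
  have h0 : (∑ l ∈ Finset.range (2 * m).toNat, c l *
      ∫ x in Set.Ioc (0 : ℝ) 1, jacobiThetaML m (l : ℤ) τ (x : ℂ)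
        * Complex.exp (-(2 * (Real.pi : ℂ) * Complex.I * ((l₀ : ℕ) : ℂ)) * (x : ℂ))) = 0 := by
    have hz : (∫ x in Set.Ioc (0 : ℝ) 1, ∑ l ∈ Finset.range (2 * m).toNat,
        c l * (jacobiThetaML m (l : ℤ) τ (x : ℂ)
          * Complex.exp (-(2 * (Real.pi : ℂ) * Complex.I * ((l₀ : ℕ) : ℂ)) * (x : ℂ)))) = 0 := by
      rw [setIntegral_congr_fun measurableSet_Ioc (g := fun _ => (0 : ℂ))]
      · simp
      · intro x _
        have := hc (x : ℂ)
        calc ∑ l ∈ Finset.range (2 * m).toNat,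
              c l * (jacobiThetaML m (l : ℤ) τ (x : ℂ)
                * Complex.exp (-(2 * (Real.pi : ℂ) * Complex.I * ((l₀ : ℕ) : ℂ)) * (x : ℂ)))
            = (∑ l ∈ Finset.range (2 * m).toNat, c l * jacobiThetaML m (l : ℤ) τ (x : ℂ))
                * Complex.exp (-(2 * (Real.pi : ℂ) * Complex.I * ((l₀ : ℕ) : ℂ)) * (x : ℂ)) := by
              rw [Finset.sum_mul]
              exact Finset.sum_congr rfl fun l _ => by ring
          _ = 0 := by rw [this, zero_mul]
    rw [integral_finset_sum] at hz
    · calc ∑ l ∈ Finset.range (2 * m).toNat, c l *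
            ∫ x in Set.Ioc (0 : ℝ) 1, jacobiThetaML m (l : ℤ) τ (x : ℂ)
              * Complex.exp (-(2 * (Real.pi : ℂ) * Complex.I * ((l₀ : ℕ) : ℂ)) * (x : ℂ))
          = ∑ l ∈ Finset.range (2 * m).toNat,
            ∫ x in Set.Ioc (0 : ℝ) 1, c l * (jacobiThetaML m (l : ℤ) τ (x : ℂ)
              * Complex.exp (-(2 * (Real.pi : ℂ) * Complex.I * ((l₀ : ℕ) : ℂ)) * (x : ℂ))) := by
            refine Finset.sum_congr rfl fun l _ => ?_
            rw [MeasureTheory.integral_const_mul]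
        _ = 0 := hz
    · intro l _
      exact (integrable_theta_char hm hτ (l : ℤ) (l₀ : ℤ)).const_mul _
  -- evaluate each inner integral
  have heval : ∀ l ∈ Finset.range (2 * m).toNat,
      (∫ x in Set.Ioc (0 : ℝ) 1, jacobiThetaML m (l : ℤ) τ (x : ℂ)
        * Complex.exp (-(2 * (Real.pi : ℂ) * Complex.I * ((l₀ : ℕ) : ℂ)) * (x : ℂ)))
      = if l = l₀ then
          Complex.exp (2 * (Real.pi : ℂ) * Complex.I * (((l₀ : ℤ) : ℂ) ^ 2 * τ / (4 * (m : ℂ))))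
        else 0 := by
    intro l hl
    have hl' : ((l : ℤ)) < 2 * m := by
      have := Finset.mem_range.mp hl
      omega
    have hcast : ((l₀ : ℕ) : ℂ) = (((l₀ : ℤ)) : ℂ) := by push_cast; ring
    rw [hcast, theta_char_integral hm hτ (l : ℤ) (l₀ : ℤ)]
    by_cases hll : l = l₀
    · subst hll
      rw [if_pos rfl]
      rw [tsum_eq_single (⟨(l : ℤ), Int.ModEq.refl _⟩ :
          {r : ℤ // r ≡ (l : ℤ) [ZMOD 2 * m]})]
      · rw [if_pos rfl]
      · intro b hb
        rw [if_neg]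
        intro hbl
        exact hb (Subtype.ext hbl)
    · rw [if_neg hll]
      have : ∀ r : {r : ℤ // r ≡ (l : ℤ) [ZMOD 2 * m]},
          (if ((r : ℤ) : ℤ) = (l₀ : ℤ) then
            Complex.exp (2 * (Real.pi : ℂ) * Complex.I * (((r : ℤ) : ℂ) ^ 2 * τ / (4 * (m : ℂ))))
          else 0) = 0 := by
        intro r
        rw [if_neg]
        intro hr
        have hmod : ((r : ℤ)) % (2 * m) = ((l : ℤ)) % (2 * m) := r.2
        rw [hr] at hmod
        rw [Int.emod_eq_of_lt (by positivity) hl₀', Int.emod_eq_of_lt (by positivity) hl']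
          at hmod
        exact hll (by exact_mod_cast hmod.symm)
      rw [tsum_congr this, tsum_zero]
  rw [Finset.sum_congr rfl (fun l hl => by rw [heval l hl])] at h0
  simp only [mul_ite, mul_zero] at h0
  rw [Finset.sum_ite_eq' (Finset.range (2 * m).toNat) l₀] at h0
  rw [if_pos (Finset.mem_range.mpr hl₀)] at h0
  exact (mul_eq_zero.mp h0).resolve_right (Complex.exp_ne_zero _)

end SkewAux

/-- If `Φ(τ, z) = Σ_{ℓ=0}^{2m−1} h_ℓ(τ) ϑ_{m,ℓ}(τ, z)` is annihilated by the skew Casimir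
operator `C^sk_{k,m}` on `ℍ × ℂ`, with each `h_ℓ` twice continuously differentiable on `ℍ`,
then each `h_ℓ` satisfies `2iv(k − 1/2) ∂_τ h_ℓ + 4v² ∂_τ ∂_τ̄ h_ℓ = 0` on `ℍ`. -/



theorem skewCasimir_thetaDecomp (k m : ℤ) (hm : 1 ≤ m) (h : ℕ → ℂ → ℂ)
    (hh : ∀ l < (2 * m).toNat, ContDiffOn ℝ 2 (h l) {τ : ℂ | 0 < τ.im})
    (hΦ : ∀ τ z : ℂ, 0 < τ.im →
      skewCasimir k m
        (fun w z => ∑ l ∈ Finset.range (2 * m).toNat, h l w * jacobiThetaML m (l : ℤ) w z)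
        τ z = 0) :
    ∀ l < (2 * m).toNat, ∀ τ : ℂ, 0 < τ.im →
      2 * Complex.I * (τ.im : ℂ) * ((k : ℂ) - 1 / 2) * dTau (h l) τ +
        4 * (τ.im : ℂ) ^ 2 * dTau (dTauBar (h l)) τ = 0 := by
  intro l₀ hl₀ τ hτ
  have hmC : (m : ℂ) ≠ 0 := by
    exact_mod_cast (lt_of_lt_of_le zero_lt_one hm).ne'
  have hπ : ((Real.pi : ℂ)) ≠ 0 := by
    exact_mod_cast Real.pi_ne_zero
  have hopen : IsOpen {w : ℂ | 0 < w.im} := isOpen_lt continuous_const Complex.continuous_im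
  have hCD : ∀ l < (2 * m).toNat, ∀ w : ℂ, 0 < w.im → ContDiffAt ℝ 2 (h l) w := fun l hl w hw =>
    (hh l hl).contDiffAt (hopen.mem_nhds hw)
  have hdh : ∀ l < (2 * m).toNat, ∀ w : ℂ, 0 < w.im → DifferentiableAt ℝ (h l) w :=
    fun l hl w hw => (hCD l hl w hw).differentiableAt two_ne_zero
  have hvne : ((τ.im : ℂ)) ≠ 0 := Complex.ofReal_ne_zero.mpr hτ.ne'
  set v : ℂ := ((τ.im : ℂ)) with hv
  set coef : ℕ → ℂ := fun l =>
    4 * Complex.I * ((k : ℂ) - 1 / 2) * v * dTau (h l) τ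
      + 8 * v ^ 2 * dTauBar (dTau (h l)) τ with hcoef
  have key : ∀ z : ℂ, ∑ l ∈ Finset.range (2 * m).toNat,
      coef l * jacobiThetaML m (l : ℤ) τ z = 0 := by
    intro z
    -- (i) heat operator identity on the upper half-plane
    have heat_eq : ∀ w : ℂ, 0 < w.im →
        heatOp m (fun w z => ∑ l ∈ Finset.range (2 * m).toNat,
            h l w * jacobiThetaML m (l : ℤ) w z) w z
          = 8 * (Real.pi : ℂ) * Complex.I * (m : ℂ) *
              ∑ l ∈ Finset.range (2 * m).toNat,
                dTau (h l) w * jacobiThetaML m (l : ℤ) w z := by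
      intro w hw
      have hθd : ∀ l : ℕ, DifferentiableAt ℝ (fun w' => jacobiThetaML m (l : ℤ) w' z) w :=
        fun l => ((SkewAux.hasDerivAt_theta_tau hm (l : ℤ) z hw).differentiableAt).restrictScalars ℝ
      have h1 : dTau (fun w' => ∑ l ∈ Finset.range (2 * m).toNat,
            h l w' * jacobiThetaML m (l : ℤ) w' z) w
          = ∑ l ∈ Finset.range (2 * m).toNat,
              (dTau (h l) w * jacobiThetaML m (l : ℤ) w z
                + h l w * SkewAux.thetaDTau m (l : ℤ) w z) := by
        rw [SkewAux.dTau_finset_sum (Finset.range (2 * m).toNat)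
          (fun l hl => ((hdh l (Finset.mem_range.mp hl) w hw).fun_mul (hθd l)))]
        refine Finset.sum_congr rfl fun l hl => ?_
        rw [SkewAux.dTau_mul (hdh l (Finset.mem_range.mp hl) w hw) (hθd l),
          SkewAux.dTau_of_hasDerivAt (SkewAux.hasDerivAt_theta_tau hm (l : ℤ) z hw)]
      have h2 : iteratedDeriv 2
          (fun y => ∑ l ∈ Finset.range (2 * m).toNat, h l w * jacobiThetaML m (l : ℤ) w y) z
          = ∑ l ∈ Finset.range (2 * m).toNat, h l w * SkewAux.D2 m (l : ℤ) w z := by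
        rw [iteratedDeriv_succ, iteratedDeriv_one]
        have hd1 : deriv (fun y => ∑ l ∈ Finset.range (2 * m).toNat,
              h l w * jacobiThetaML m (l : ℤ) w y)
            = fun y => ∑ l ∈ Finset.range (2 * m).toNat, h l w * SkewAux.D1 m (l : ℤ) w y := by
          funext y
          exact (HasDerivAt.fun_sum (fun (l : ℕ) _ =>
            (SkewAux.hasDerivAt_theta_z hm (l : ℤ) hw y).const_mul (h l w))).deriv
        rw [hd1]
        exact (HasDerivAt.fun_sum (fun (l : ℕ) _ =>
          (SkewAux.hasDerivAt_D1 hm (l : ℤ) hw z).const_mul (h l w))).deriv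
      show 8 * (Real.pi : ℂ) * Complex.I * (m : ℂ) *
          dTau (fun w' => ∑ l ∈ Finset.range (2 * m).toNat,
            h l w' * jacobiThetaML m (l : ℤ) w' z) w
          - iteratedDeriv 2
              (fun y => ∑ l ∈ Finset.range (2 * m).toNat,
                h l w * jacobiThetaML m (l : ℤ) w y) z = _
      rw [h1, h2, Finset.mul_sum, ← Finset.sum_sub_distrib, Finset.mul_sum]
      refine Finset.sum_congr rfl fun l hl => ?_
      rw [← SkewAux.heat_theta hm (l : ℤ) w z]
      ring
    -- (ii) unfold the skew Casimir operator and replace heatOp on a neighborhood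
    have h0 := hΦ τ z hτ
    rw [skewCasimir] at h0
    have hG : dTauBar (fun w => ((w.im ^ ((k : ℝ) - 1 / 2) : ℝ) : ℂ) *
          heatOp m (fun w z => ∑ l ∈ Finset.range (2 * m).toNat,
            h l w * jacobiThetaML m (l : ℤ) w z) w z) τ
        = dTauBar (fun w => ((w.im ^ ((k : ℝ) - 1 / 2) : ℝ) : ℂ) *
            (8 * (Real.pi : ℂ) * Complex.I * (m : ℂ) *
              ∑ l ∈ Finset.range (2 * m).toNat,
                dTau (h l) w * jacobiThetaML m (l : ℤ) w z)) τ := by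
      apply SkewAux.dTauBar_congr
      filter_upwards [hopen.mem_nhds hτ] with w hw
      rw [heat_eq w hw]
    rw [hG] at h0
    -- (iii) compute the remaining ∂τ̄ derivative
    have hqdiff : DifferentiableAt ℝ (fun w : ℂ => ((w.im ^ ((k : ℝ) - 1 / 2) : ℝ) : ℂ)) τ :=
      SkewAux.differentiableAt_impow _ hτ
    have hθd : ∀ l : ℕ, DifferentiableAt ℝ (fun w' => jacobiThetaML m (l : ℤ) w' z) τ :=
      fun l => ((SkewAux.hasDerivAt_theta_tau hm (l : ℤ) z hτ).differentiableAt).restrictScalars ℝ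
    have hAdiff : ∀ l ∈ Finset.range (2 * m).toNat,
        DifferentiableAt ℝ (fun w => dTau (h l) w * jacobiThetaML m (l : ℤ) w z) τ :=
      fun l hl => (SkewAux.differentiableAt_dTau
        (hCD l (Finset.mem_range.mp hl) τ hτ)).mul (hθd l)
    have hSdiff : DifferentiableAt ℝ (fun w => ∑ l ∈ Finset.range (2 * m).toNat,
        dTau (h l) w * jacobiThetaML m (l : ℤ) w z) τ := DifferentiableAt.fun_sum hAdiff
    have hprod : dTauBar (fun w => ((w.im ^ ((k : ℝ) - 1 / 2) : ℝ) : ℂ) *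
          (8 * (Real.pi : ℂ) * Complex.I * (m : ℂ) *
            ∑ l ∈ Finset.range (2 * m).toNat,
              dTau (h l) w * jacobiThetaML m (l : ℤ) w z)) τ
        = (Complex.I / 2) * (((((k : ℝ) - 1 / 2)) * τ.im ^ (((k : ℝ) - 1 / 2) - 1) : ℝ) : ℂ)
            * (8 * (Real.pi : ℂ) * Complex.I * (m : ℂ) *
              ∑ l ∈ Finset.range (2 * m).toNat,
                dTau (h l) τ * jacobiThetaML m (l : ℤ) τ z)
          + ((τ.im ^ ((k : ℝ) - 1 / 2) : ℝ) : ℂ) *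
            (8 * (Real.pi : ℂ) * Complex.I * (m : ℂ) *
              ∑ l ∈ Finset.range (2 * m).toNat,
                dTauBar (dTau (h l)) τ * jacobiThetaML m (l : ℤ) τ z) := by
      rw [SkewAux.dTauBar_mul hqdiff (hSdiff.const_mul _),
        SkewAux.dTauBar_impow _ hτ]
      congr 1
      rw [SkewAux.dTauBar_const_mul hSdiff,
        SkewAux.dTauBar_finset_sum (Finset.range (2 * m).toNat) hAdiff]
      rw [show (∑ l ∈ Finset.range (2 * m).toNat,
          dTauBar (fun w => dTau (h l) w * jacobiThetaML m (l : ℤ) w z) τ)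
          = ∑ l ∈ Finset.range (2 * m).toNat,
              dTauBar (dTau (h l)) τ * jacobiThetaML m (l : ℤ) τ z from
        Finset.sum_congr rfl fun l hl => by
          rw [SkewAux.dTauBar_mul (SkewAux.differentiableAt_dTau
              (hCD l (Finset.mem_range.mp hl) τ hτ)) (hθd l),
            SkewAux.dTauBar_of_hasDerivAt (SkewAux.hasDerivAt_theta_tau hm (l : ℤ) z hτ)]
          ring]
    rw [hprod] at h0
    -- (iv) rpow bookkeeping and algebra
    have hPQ' : (τ.im ^ ((1 : ℝ) / 2 - (k : ℝ)) : ℝ) * (τ.im ^ (((k : ℝ) - 1 / 2) - 1) : ℝ)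
        = (τ.im)⁻¹ := by
      rw [← Real.rpow_add hτ, show (1 : ℝ) / 2 - (k : ℝ) + (((k : ℝ) - 1 / 2) - 1) = -1 by ring,
        Real.rpow_neg_one]
    have hPQ : (τ.im ^ ((1 : ℝ) / 2 - (k : ℝ)) : ℝ) * (τ.im ^ ((k : ℝ) - 1 / 2) : ℝ) = 1 := by
      rw [← Real.rpow_add hτ, show (1 : ℝ) / 2 - (k : ℝ) + ((k : ℝ) - 1 / 2) = 0 by ring,
        Real.rpow_zero]
    have hPQ'c : ((τ.im ^ ((1 : ℝ) / 2 - (k : ℝ)) : ℝ) : ℂ)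
        * ((τ.im ^ (((k : ℝ) - 1 / 2) - 1) : ℝ) : ℂ) = v⁻¹ := by
      rw [hv, ← Complex.ofReal_mul, hPQ', Complex.ofReal_inv]
    have hPQc : ((τ.im ^ ((1 : ℝ) / 2 - (k : ℝ)) : ℝ) : ℂ)
        * ((τ.im ^ ((k : ℝ) - 1 / 2) : ℝ) : ℂ) = 1 := by
      rw [← Complex.ofReal_mul, hPQ, Complex.ofReal_one]
    set A : ℂ := ∑ l ∈ Finset.range (2 * m).toNat,
      dTau (h l) τ * jacobiThetaML m (l : ℤ) τ z with hA
    set B : ℂ := ∑ l ∈ Finset.range (2 * m).toNat,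
      dTauBar (dTau (h l)) τ * jacobiThetaML m (l : ℤ) τ z with hB
    have hsplit : ∑ l ∈ Finset.range (2 * m).toNat, coef l * jacobiThetaML m (l : ℤ) τ z
        = 4 * Complex.I * ((k : ℂ) - 1 / 2) * v * A + 8 * v ^ 2 * B := by
      rw [hA, hB, Finset.mul_sum, Finset.mul_sum, ← Finset.sum_add_distrib]
      refine Finset.sum_congr rfl fun l _ => ?_
      rw [hcoef]
      ring
    rw [hsplit]
    -- transform h0 into the desired equation
    have hc₀cast : ((((k : ℝ) - 1 / 2) : ℝ) : ℂ) = (k : ℂ) - 1 / 2 := by push_cast; ring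
    have hexp : -(Complex.I * ((τ.im : ℂ)) ^ 2 / ((Real.pi : ℂ) * (m : ℂ))) *
          ((τ.im ^ ((1 : ℝ) / 2 - (k : ℝ)) : ℝ) : ℂ) *
          ((Complex.I / 2) * (((((k : ℝ) - 1 / 2)) * τ.im ^ (((k : ℝ) - 1 / 2) - 1) : ℝ) : ℂ)
              * (8 * (Real.pi : ℂ) * Complex.I * (m : ℂ) * A)
            + ((τ.im ^ ((k : ℝ) - 1 / 2) : ℝ) : ℂ) *
              (8 * (Real.pi : ℂ) * Complex.I * (m : ℂ) * B))
        = 4 * Complex.I * ((k : ℂ) - 1 / 2) * v * A + 8 * v ^ 2 * B := by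
      rw [Complex.ofReal_mul, hc₀cast]
      have hre : -(Complex.I * v ^ 2 / ((Real.pi : ℂ) * (m : ℂ))) *
            ((τ.im ^ ((1 : ℝ) / 2 - (k : ℝ)) : ℝ) : ℂ) *
            ((Complex.I / 2) * (((k : ℂ) - 1 / 2) * ((τ.im ^ (((k : ℝ) - 1 / 2) - 1) : ℝ) : ℂ))
                * (8 * (Real.pi : ℂ) * Complex.I * (m : ℂ) * A)
              + ((τ.im ^ ((k : ℝ) - 1 / 2) : ℝ) : ℂ) *
                (8 * (Real.pi : ℂ) * Complex.I * (m : ℂ) * B))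
          = (((τ.im ^ ((1 : ℝ) / 2 - (k : ℝ)) : ℝ) : ℂ)
                * ((τ.im ^ (((k : ℝ) - 1 / 2) - 1) : ℝ) : ℂ)) *
              (-(Complex.I * Complex.I * Complex.I) * ((k : ℂ) - 1 / 2) * 4 *
                (v ^ 2 * ((Real.pi : ℂ) * (m : ℂ)) / ((Real.pi : ℂ) * (m : ℂ))) * A)
            + (((τ.im ^ ((1 : ℝ) / 2 - (k : ℝ)) : ℝ) : ℂ)
                * ((τ.im ^ ((k : ℝ) - 1 / 2) : ℝ) : ℂ)) *
              (-(Complex.I * Complex.I) * 8 *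
                (v ^ 2 * ((Real.pi : ℂ) * (m : ℂ)) / ((Real.pi : ℂ) * (m : ℂ))) * B) := by
        ring
      rw [hre, hPQ'c, hPQc]
      simp only [Complex.I_mul_I]
      field_simp
    rw [hexp] at h0
    exact h0
  -- Step 2: linear independence of the theta components
  have hzero : coef l₀ = 0 := SkewAux.theta_indep hm hτ coef key l₀ hl₀
  -- Step 3: conclude using symmetry of second derivatives
  have hcomm : dTau (dTauBar (h l₀)) τ = dTauBar (dTau (h l₀)) τ :=
    SkewAux.dTau_dTauBar_comm (hCD l₀ hl₀ τ hτ)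
  rw [hcomm]
  rw [hcoef] at hzero
  simp only at hzero
  linear_combination hzero / 2
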